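/- Let Λ ⊆ ℝ^N be a Delone set. If Λ is linearly repetitive (LR), then Λ satisfies positivity of quasiweights (PQ), i.e. inf{ν'(P) : P a ball pattern on Λ with r(P) ≥ 1} > 0. -/

import Mathlib

open Filter MeasureTheory Bornology
open scoped ENNReal

noncomputable section

/-- Euclidean space `ℝ^N`. -/
abbrev Euc (N : ℕ) := EuclideanSpace ℝ (Fin N)

/-- The packing radius of a set: half of the infimum of distances between
distinct points (`⊤` if no such pair exists). -/
def rPack {N : ℕ} (Λ : Set (Euc N)) : ℝ≥0∞ :=
  ⨅ (x ∈ Λ) (y ∈ Λ) (_ : x ≠ y), edist x y / 2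

/-- The covering radius of a set: the supremum over all points of the space of
the distance to the set. -/
def rCov {N : ℕ} (Λ : Set (Euc N)) : ℝ≥0∞ :=
  ⨆ p : Euc N, EMetric.infEdist p Λ

/-- A set is uniformly discrete if its packing radius is positive. -/
def UniformlyDiscrete {N : ℕ} (Λ : Set (Euc N)) : Prop := 0 < rPack Λ

/-- A set is relatively dense if its covering radius is finite. -/
def RelativelyDense {N : ℕ} (Λ : Set (Euc N)) : Prop := rCov Λ < ⊤

/-- A Delone set is a uniformly discrete and relatively dense set. -/
def IsDelone {N : ℕ} (Λ : Set (Euc N)) : Prop :=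
  UniformlyDiscrete Λ ∧ RelativelyDense Λ

/-- Λ is non-periodic if no nonzero translate of Λ equals Λ. -/
def NonPeriodic {N : ℕ} (Λ : Set (Euc N)) : Prop :=
  ∀ t : Euc N, t ≠ 0 → (fun p => p - t) '' Λ ≠ Λ

/-- The patch of the ball pattern `(x, R)`: `(Λ - x) ∩ B_R`. -/
def patch {N : ℕ} (Λ : Set (Euc N)) (x : Euc N) (R : ℝ) : Set (Euc N) :=
  ((fun y => y - x) '' Λ) ∩ Metric.closedBall 0 R

/-- The locater set of the ball pattern `(x, R)`: the set of points of Λ whose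
`R`-patch agrees with that of `x`. -/
def locSet {N : ℕ} (Λ : Set (Euc N)) (x : Euc N) (R : ℝ) : Set (Euc N) :=
  {y ∈ Λ | patch Λ y R = patch Λ x R}

/-- Λ is repetitive if the locater set of every ball pattern is relatively dense. -/
def Repetitive {N : ℕ} (Λ : Set (Euc N)) : Prop :=
  ∀ x ∈ Λ, ∀ R : ℝ, 0 < R → RelativelyDense (locSet Λ x R)

/-- `L_P(Q)`: the points of the locater set of `(x,R)` whose `R`-ball lies inside `Q`. -/
def locIn {N : ℕ} (Λ : Set (Euc N)) (x : Euc N) (R : ℝ) (Q : Set (Euc N)) :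
    Set (Euc N) :=
  {y ∈ locSet Λ x R | Metric.closedBall y R ⊆ Q}

/-- `♯_P Q`: the number of copies of the ball pattern `P = (x,R)` in `Q`. -/
def countP {N : ℕ} (Λ : Set (Euc N)) (x : Euc N) (R : ℝ) (Q : Set (Euc N)) : ℕ :=
  (locIn Λ x R Q).ncard

/-- `♯'_P Q`: the maximal number of completely disjoint copies of `P = (x,R)` in `Q`. -/
def countP' {N : ℕ} (Λ : Set (Euc N)) (x : Euc N) (R : ℝ) (Q : Set (Euc N)) : ℕ :=
  sSup {n : ℕ | ∃ A : Finset (Euc N), ↑A ⊆ locIn Λ x R Q ∧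
    (∀ u ∈ A, ∀ v ∈ A, u ≠ v → 2 * R < dist u v) ∧ A.card = n}

/-- The cube with corner `a` and sidelength `s`. -/
def cube {N : ℕ} (a : Euc N) (s : ℝ) : Set (Euc N) :=
  {p | ∀ i, a i ≤ p i ∧ p i ≤ a i + s}

/-- The filter describing cubes `C` with `|C| → ∞`: arbitrary corner, sidelength
tending to infinity. -/
def cubeFilter (N : ℕ) : Filter (Euc N × ℝ) := (⊤ : Filter (Euc N)) ×ˢ atTop

/-- The Lebesgue measure `|B_R|` of a closed ball of radius `R` in `ℝ^N`. -/
def ballVol (N : ℕ) (R : ℝ) : ℝ := (volume (Metric.closedBall (0 : Euc N) R)).toReal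

/-- The lower density `ν(P)` of the ball pattern `P = (x,R)`:
`liminf_{|C|→∞} ♯_P C · |B_R| / |C|` over cubes `C`. -/
def nu {N : ℕ} (Λ : Set (Euc N)) (x : Euc N) (R : ℝ) : ℝ :=
  liminf (fun cs : Euc N × ℝ =>
    (countP Λ x R (cube cs.1 cs.2) : ℝ) * ballVol N R / cs.2 ^ N) (cubeFilter N)

/-- The lower reduced density `ν'(P)` of the ball pattern `P = (x,R)`:
`liminf_{|C|→∞} ♯'_P C · |B_R| / |C|` over cubes `C`. -/
def nu' {N : ℕ} (Λ : Set (Euc N)) (x : Euc N) (R : ℝ) : ℝ :=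
  liminf (fun cs : Euc N × ℝ =>
    (countP' Λ x R (cube cs.1 cs.2) : ℝ) * ballVol N R / cs.2 ^ N) (cubeFilter N)

/-- `w = inf {ν(P) : r(P) ≥ 1}`. -/
def wPW {N : ℕ} (Λ : Set (Euc N)) : ℝ :=
  sInf {v | ∃ x ∈ Λ, ∃ R : ℝ, 1 ≤ R ∧ v = nu Λ x R}

/-- `w' = inf {ν'(P) : r(P) ≥ 1}`. -/
def wPQ {N : ℕ} (Λ : Set (Euc N)) : ℝ :=
  sInf {v | ∃ x ∈ Λ, ∃ R : ℝ, 1 ≤ R ∧ v = nu' Λ x R}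

/-- Positivity of weights (PW). -/
def PW {N : ℕ} (Λ : Set (Euc N)) : Prop := 0 < wPW Λ

/-- Positivity of quasiweights (PQ). -/
def PQ {N : ℕ} (Λ : Set (Euc N)) : Prop := 0 < wPQ Λ

/-- A function on (bounded) subsets of `ℝ^N` is subadditive if
`F(Q₁ ∪ Q₂) ≤ F(Q₁) + F(Q₂)` for disjoint bounded `Q₁, Q₂`. -/
def SubadditiveFn {N : ℕ} (F : Set (Euc N) → ℝ) : Prop :=
  ∀ Q₁ Q₂ : Set (Euc N), IsBounded Q₁ → IsBounded Q₂ → Disjoint Q₁ Q₂ →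
    F (Q₁ ∪ Q₂) ≤ F Q₁ + F Q₂

/-- A function on (bounded) subsets is Λ-invariant if `F(Q) = F(t + Q)` whenever
`t + (Q ∩ Λ) = (t + Q) ∩ Λ`. -/
def InvariantFn {N : ℕ} (Λ : Set (Euc N)) (F : Set (Euc N) → ℝ) : Prop :=
  ∀ (t : Euc N) (Q : Set (Euc N)), IsBounded Q →
    (fun p => t + p) '' (Q ∩ Λ) = ((fun p => t + p) '' Q) ∩ Λ →
    F Q = F ((fun p => t + p) '' Q)

/-- Λ satisfies the subadditive ergodic theorem (SET) if for every subadditive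
Λ-invariant function `F` the limit `lim_{|C|→∞} F(C)/|C|` over cubes exists. -/
def SET {N : ℕ} (Λ : Set (Euc N)) : Prop :=
  ∀ F : Set (Euc N) → ℝ, SubadditiveFn F → InvariantFn Λ F →
    ∃ L : ℝ, Tendsto (fun cs : Euc N × ℝ => F (cube cs.1 cs.2) / cs.2 ^ N)
      (cubeFilter N) (nhds L)

/-- Linear repetitivity (LR): `sup {r_cov(L_P)/r(P) : r(P) ≥ 1} < ∞`. -/
def LR {N : ℕ} (Λ : Set (Euc N)) : Prop :=
  (⨆ (x ∈ Λ) (R : ℝ) (_ : 1 ≤ R), rCov (locSet Λ x R) / ENNReal.ofReal R) < ⊤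

/-- The repulsion property (RP): `inf {r_pack(L_P)/r(P) : P a ball pattern} > 0`. -/
def RP {N : ℕ} (Λ : Set (Euc N)) : Prop :=
  0 < ⨅ (x ∈ Λ) (R : ℝ) (_ : 0 < R), rPack (locSet Λ x R) / ENNReal.ofReal R

/-- The Voronoi cell of `x` with respect to `Γ`. -/
def voronoiCell {N : ℕ} (Γ : Set (Euc N)) (x : Euc N) : Set (Euc N) :=
  {p | ∀ y ∈ Γ, dist p x ≤ dist p y}

/-- The inner radius of a set `V` around `x`. -/
def rIn {N : ℕ} (x : Euc N) (V : Set (Euc N)) : ℝ≥0∞ :=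
  sSup {R : ℝ≥0∞ | EMetric.closedBall x R ⊆ V}

/-- The outer radius of a set `V` around `x`. -/
def rOut {N : ℕ} (x : Euc N) (V : Set (Euc N)) : ℝ≥0∞ :=
  sInf {R : ℝ≥0∞ | V ⊆ EMetric.closedBall x R}

/-- The distortion `λ(V) = r_out(V)/r_in(V)` of a set `V` around `x`. -/
def distortion {N : ℕ} (x : Euc N) (V : Set (Euc N)) : ℝ≥0∞ := rOut x V / rIn x V

/-- The distortion of a discrete set: the supremum of the distortions of its
Voronoi cells. -/
def setDistortion {N : ℕ} (Γ : Set (Euc N)) : ℝ≥0∞ :=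
  ⨆ x ∈ Γ, distortion x (voronoiCell Γ x)

/-- Uniformity of return words (U): the distortions of all locater sets of Λ are
uniformly bounded. -/
def URW {N : ℕ} (Λ : Set (Euc N)) : Prop :=
  (⨆ (x ∈ Λ) (R : ℝ) (_ : 0 < R), setDistortion (locSet Λ x R)) < ⊤

end

/-- A linearly repetitive Delone set satisfies positivity of
quasiweights (PQ). -/
lemma coord_dist_le {N : ℕ} (u v : Euc N) (i : Fin N) : dist (u i) (v i) ≤ dist u v := by
  rw [EuclideanSpace.dist_eq]
  have h1 : dist (u i) (v i) = Real.sqrt (dist (u i) (v i) ^ 2) := (Real.sqrt_sq dist_nonneg).symm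
  rw [h1]
  exact Real.sqrt_le_sqrt (Finset.single_le_sum (f := fun j => dist (u j) (v j) ^ 2)
    (fun j _ => sq_nonneg _) (Finset.mem_univ i))

lemma dist_le_of_coords {N : ℕ} (u v : Euc N) (t : ℝ) (ht : 0 ≤ t)
    (h : ∀ i, dist (u i) (v i) ≤ t) : dist u v ≤ Real.sqrt N * t := by
  rw [EuclideanSpace.dist_eq]
  have hsum : ∑ i, dist (u i) (v i) ^ 2 ≤ (N : ℝ) * t ^ 2 := by
    have : ∀ i ∈ Finset.univ, dist (u i) (v i) ^ 2 ≤ t ^ 2 := by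
      intro i _
      have h1 := h i
      nlinarith [dist_nonneg (x := u i) (y := v i)]
    calc ∑ i, dist (u i) (v i) ^ 2 ≤ ∑ _i : Fin N, t ^ 2 := Finset.sum_le_sum this
      _ = (N : ℝ) * t ^ 2 := by simp
  calc Real.sqrt (∑ i, dist (u i) (v i) ^ 2) ≤ Real.sqrt ((N : ℝ) * t ^ 2) :=
        Real.sqrt_le_sqrt hsum
    _ = Real.sqrt N * t := by rw [Real.sqrt_mul (Nat.cast_nonneg N), Real.sqrt_sq ht]

lemma card_le_grid {N : ℕ} (a : Euc N) (s t : ℝ) (ht : 0 < t) (A : Finset (Euc N))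
    (hcube : ∀ y ∈ A, y ∈ cube a s)
    (hsep : ∀ u ∈ A, ∀ v ∈ A, u ≠ v → Real.sqrt N * t < dist u v) :
    A.card ≤ (⌊s / t⌋₊ + 1) ^ N := by
  classical
  set M : ℕ := ⌊s / t⌋₊ + 1 with hM
  set f : Euc N → (Fin N → Fin M) := fun y i =>
    ⟨min ⌊(y i - a i) / t⌋₊ ⌊s / t⌋₊, by simp only [hM]; omega⟩ with hf
  have hcoll : ∀ y ∈ A, ∀ i, (f y i : ℕ) = ⌊(y i - a i) / t⌋₊ := by
    intro y hy i
    have h1 := (hcube y hy) i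
    have h2 : (y i - a i) / t ≤ s / t := by
      have : y i - a i ≤ s := by linarith [h1.1, h1.2]
      gcongr
    simp only [hf]
    exact min_eq_left (Nat.floor_le_floor h2)
  have hinj : Set.InjOn f A := by
    intro u hu v hv huv
    by_contra hne
    have hlt := hsep u hu v hv hne
    have hco : ∀ i, dist (u i) (v i) ≤ t := by
      intro i
      have e1 : ⌊(u i - a i) / t⌋₊ = ⌊(v i - a i) / t⌋₊ := by
        rw [← hcoll u hu i, ← hcoll v hv i]
        exact congrArg Fin.val (congrFun huv i)
      have hu1 := (hcube u hu) i
      have hv1 := (hcube v hv) i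
      set xu := (u i - a i) / t with hxu
      set xv := (v i - a i) / t with hxv
      have hxu0 : 0 ≤ xu := by apply div_nonneg _ ht.le; linarith [hu1.1]
      have hxv0 : 0 ≤ xv := by apply div_nonneg _ ht.le; linarith [hv1.1]
      have lu : (⌊xu⌋₊ : ℝ) ≤ xu := Nat.floor_le hxu0
      have lv : (⌊xv⌋₊ : ℝ) ≤ xv := Nat.floor_le hxv0
      have hu2 : xu < ⌊xu⌋₊ + 1 := Nat.lt_floor_add_one _
      have hv2 : xv < ⌊xv⌋₊ + 1 := Nat.lt_floor_add_one _
      have e1' : (⌊xu⌋₊ : ℝ) = (⌊xv⌋₊ : ℝ) := by exact_mod_cast congrArg Nat.cast e1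
      have hd : |xu - xv| < 1 := by rw [abs_sub_lt_iff]; constructor <;> linarith
      have hut : u i - a i = xu * t := (div_mul_cancel₀ _ ht.ne').symm
      have hvt : v i - a i = xv * t := (div_mul_cancel₀ _ ht.ne').symm
      have : |u i - v i| ≤ t := by
        have : u i - v i = (xu - xv) * t := by linarith [hut, hvt]
        rw [this, abs_mul, abs_of_pos ht]
        nlinarith [abs_nonneg (xu - xv)]
      rw [Real.dist_eq]; exact this
    have := dist_le_of_coords u v t ht.le hco
    linarith
  calc A.card ≤ Fintype.card (Fin N → Fin M) := by
        have := Finset.card_le_card_of_injOn f (fun y _ => Finset.mem_univ (f y)) hinj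
        simpa using this
    _ = M ^ N := by simp [Fintype.card_fun]

-- ball volume scaling
lemma ballVol_scale (N : ℕ) (R : ℝ) (hR : 0 ≤ R) :
    ballVol N R = R ^ N * ballVol N 1 := by
  unfold ballVol
  rw [Measure.addHaar_closedBall _ _ hR, Measure.addHaar_closedBall _ _ zero_le_one]
  simp [ENNReal.toReal_mul, ENNReal.toReal_ofReal (pow_nonneg hR _), finrank_euclideanSpace_fin]

lemma ballVol_pos (N : ℕ) (R : ℝ) (hR : 0 < R) : 0 < ballVol N R := by
  unfold ballVol
  rw [ENNReal.toReal_pos_iff]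
  exact ⟨Metric.measure_closedBall_pos volume _ hR, measure_closedBall_lt_top⟩

-- the defining set of countP'
def cSet {N : ℕ} (Λ : Set (Euc N)) (x : Euc N) (R : ℝ) (Q : Set (Euc N)) : Set ℕ :=
  {n : ℕ | ∃ A : Finset (Euc N), ↑A ⊆ locIn Λ x R Q ∧
    (∀ u ∈ A, ∀ v ∈ A, u ≠ v → 2 * R < dist u v) ∧ A.card = n}

lemma countP'_eq {N : ℕ} (Λ : Set (Euc N)) (x : Euc N) (R : ℝ) (Q : Set (Euc N)) :
    countP' Λ x R Q = sSup (cSet Λ x R Q) := rfl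

lemma cSet_bdd {N : ℕ} (hN : 0 < N) (Λ : Set (Euc N)) (x : Euc N) (R : ℝ) (hR : 0 < R)
    (a : Euc N) (s : ℝ) :
    ∀ n ∈ cSet Λ x R (cube a s), n ≤ (⌊s / (2 * R / Real.sqrt N)⌋₊ + 1) ^ N := by
  rintro n ⟨A, hA, hsep, rfl⟩
  have hsN : (0:ℝ) < Real.sqrt N := Real.sqrt_pos.2 (by exact_mod_cast hN)
  have ht : (0:ℝ) < 2 * R / Real.sqrt N := by positivity
  apply card_le_grid a s _ ht A
  · intro y hy
    have h1 := hA hy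
    exact h1.2 (Metric.mem_closedBall_self hR.le)
  · intro u hu v hv huv
    have := hsep u hu v hv huv
    have he : Real.sqrt N * (2 * R / Real.sqrt N) = 2 * R := by
      field_simp
    rw [he]; exact this

lemma cSet_bddAbove {N : ℕ} (hN : 0 < N) (Λ : Set (Euc N)) (x : Euc N) (R : ℝ) (hR : 0 < R)
    (a : Euc N) (s : ℝ) : BddAbove (cSet Λ x R (cube a s)) :=
  ⟨_, cSet_bdd hN Λ x R hR a s⟩

lemma countP'_lower {N : ℕ} (hN : 0 < N) (Λ : Set (Euc N)) (x : Euc N) (R : ℝ) (hR : 1 ≤ R)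
    (c' : ℝ) (hc' : 2 ≤ c')
    (hcover : ∀ p : Euc N, ∃ y ∈ locSet Λ x R, dist p y < c' * R)
    (a : Euc N) (s : ℝ) (hs : 4 * (4 * c' * R) ≤ s) :
    (⌊s / (4 * c' * R)⌋₊ - 1) ^ N ≤ countP' Λ x R (cube a s) := by
  classical
  have hR0 : (0:ℝ) < R := by linarith
  have hc0 : (0:ℝ) < c' := by linarith
  set D : ℝ := 4 * c' * R with hD
  have hD0 : (0:ℝ) < D := by positivity
  set m : ℕ := ⌊s / D⌋₊ - 1 with hm
  have hfl : 4 ≤ ⌊s / D⌋₊ := by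
    have : (4:ℝ) ≤ s / D := (le_div_iff₀ hD0).2 (by linarith)
    exact_mod_cast Nat.le_floor (by exact_mod_cast this)
  have hmmul : ((m:ℝ) + 1) * D ≤ s := by
    have h1 : ((m:ℝ) + 1) = (⌊s / D⌋₊ : ℝ) := by
      rw [hm]; push_cast [Nat.cast_sub (by omega : 1 ≤ ⌊s / D⌋₊)]; ring
    rw [h1]
    calc (⌊s / D⌋₊ : ℝ) * D ≤ (s / D) * D := by
          apply mul_le_mul_of_nonneg_right (Nat.floor_le (div_nonneg (by nlinarith) hD0.le)) hD0.le
      _ = s := by field_simp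
  choose Y hY1 hY2 using hcover
  set q : (Fin N → Fin m) → Euc N := fun k => (WithLp.toLp 2 (fun i => a i + D + (k i : ℝ) * D) : Euc N)
    with hq
  have hqi : ∀ k i, q k i = a i + D + (k i : ℝ) * D := fun _ _ => rfl
  have hqsep : ∀ k k' : Fin N → Fin m, k ≠ k' → D ≤ dist (q k) (q k') := by
    intro k k' hkk
    obtain ⟨i, hi⟩ := Function.ne_iff.1 hkk
    have h1 : (1:ℝ) ≤ |(k i : ℝ) - (k' i : ℝ)| := by
      have : (k i : ℕ) ≠ (k' i : ℕ) := fun h => hi (Fin.ext h)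
      have h2 : ((k i : ℕ) : ℤ) ≠ ((k' i : ℕ) : ℤ) := by exact_mod_cast this
      have h3 : (1:ℤ) ≤ |((k i : ℕ) : ℤ) - ((k' i : ℕ) : ℤ)| := Int.one_le_abs (by omega)
      calc (1:ℝ) ≤ |(((k i : ℕ) : ℤ) : ℝ) - (((k' i : ℕ) : ℤ) : ℝ)| := by
            rw [← Int.cast_sub, ← Int.cast_abs]; exact_mod_cast h3
        _ = |(k i : ℝ) - (k' i : ℝ)| := by push_cast; ring_nf
    have h2 : dist (q k i) (q k' i) = |(k i : ℝ) - (k' i : ℝ)| * D := by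
      rw [Real.dist_eq, hqi, hqi]
      rw [show a i + D + (k i : ℝ) * D - (a i + D + (k' i : ℝ) * D)
        = ((k i : ℝ) - (k' i : ℝ)) * D by ring, abs_mul, abs_of_pos hD0]
    calc D = 1 * D := (one_mul D).symm
      _ ≤ |(k i : ℝ) - (k' i : ℝ)| * D := by
          apply mul_le_mul_of_nonneg_right h1 hD0.le
      _ = dist (q k i) (q k' i) := h2.symm
      _ ≤ dist (q k) (q k') := coord_dist_le _ _ i
  set y : (Fin N → Fin m) → Euc N := fun k => Y (q k) with hy
  have hysep : ∀ k k' : Fin N → Fin m, k ≠ k' → 2 * R < dist (y k) (y k') := by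
    intro k k' hkk
    have h1 := hqsep k k' hkk
    have h2 := hY2 (q k)
    have h3 := hY2 (q k')
    have : dist (q k) (q k') ≤ dist (q k) (y k) + dist (y k) (y k') + dist (y k') (q k') :=
      dist_triangle4 _ _ _ _
    rw [dist_comm (y k') (q k')] at this
    have hcR : c' * R + c' * R + 2 * R < D := by nlinarith
    nlinarith [dist_comm (q k) (y k)]
  have hyin : ∀ k, y k ∈ locIn Λ x R (cube a s) := by
    intro k
    refine ⟨hY1 (q k), ?_⟩
    intro p hp
    intro i
    have hd1 : dist (p i) (y k i) ≤ R := le_trans (coord_dist_le p (y k) i)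
      (Metric.mem_closedBall.1 hp)
    have hd2 : dist (y k i) (q k i) ≤ c' * R := le_trans (coord_dist_le _ _ i)
      (by rw [dist_comm]; exact (hY2 (q k)).le)
    rw [Real.dist_eq] at hd1 hd2
    have hki : (k i : ℝ) ≤ (m : ℝ) - 1 := by
      have : (k i : ℕ) ≤ m - 1 := Nat.le_sub_one_of_lt (k i).2
      have h4 : ((k i : ℕ) : ℝ) ≤ ((m - 1 : ℕ) : ℝ) := by exact_mod_cast this
      rwa [Nat.cast_sub (by omega : 1 ≤ m), Nat.cast_one] at h4
    have hqik := hqi k i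
    have habs1 := abs_le.1 hd1
    have habs2 := abs_le.1 hd2
    have hk0 : (0:ℝ) ≤ ((k i : ℕ) : ℝ) := Nat.cast_nonneg _
    constructor
    · nlinarith [habs1.1, habs1.2, habs2.1, habs2.2, hk0]
    · nlinarith [habs1.1, habs1.2, habs2.1, habs2.2, hki, hmmul]
  have hyinj : Function.Injective y := by
    intro k k' h
    by_contra hkk
    have := hysep k k' hkk
    rw [h, dist_self] at this
    linarith
  set A : Finset (Euc N) := Finset.image y Finset.univ with hA
  have hAcard : A.card = m ^ N := by
    rw [hA, Finset.card_image_of_injective _ hyinj, Finset.card_univ, Fintype.card_fun]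
    simp
  have hmem : m ^ N ∈ cSet Λ x R (cube a s) := by
    refine ⟨A, ?_, ?_, hAcard⟩
    · intro z hz
      simp only [hA, Finset.coe_image, Set.mem_image] at hz
      obtain ⟨k, _, rfl⟩ := hz
      exact hyin k
    · intro u hu v hv huv
      simp only [hA, Finset.mem_image] at hu hv
      obtain ⟨k, _, rfl⟩ := hu
      obtain ⟨k', _, rfl⟩ := hv
      exact hysep k k' (fun h => huv (congrArg y h))
  rw [countP'_eq]
  exact le_csSup (cSet_bddAbove hN Λ x R hR0 a s) hmem

lemma countP'_upper {N : ℕ} (hN : 0 < N) (Λ : Set (Euc N)) (x : Euc N) (R : ℝ) (hR : 0 < R)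
    (a : Euc N) (s : ℝ) :
    countP' Λ x R (cube a s) ≤ (⌊s / (2 * R / Real.sqrt N)⌋₊ + 1) ^ N := by
  rw [countP'_eq]
  refine csSup_le ?_ (cSet_bdd hN Λ x R hR a s)
  exact ⟨0, ∅, by simp, by simp, by simp⟩

lemma nu'_lower {N : ℕ} (hN : 0 < N) (Λ : Set (Euc N)) (x : Euc N) (R : ℝ) (hR : 1 ≤ R)
    (c' : ℝ) (hc' : 2 ≤ c')
    (hcover : ∀ p : Euc N, ∃ y ∈ locSet Λ x R, dist p y < c' * R) :
    ballVol N 1 / (8 * c') ^ N ≤ nu' Λ x R := by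
  have hR0 : (0:ℝ) < R := by linarith
  have hc0 : (0:ℝ) < c' := by linarith
  set D : ℝ := 4 * c' * R with hD
  have hD0 : (0:ℝ) < D := by positivity
  set V : ℝ := ballVol N R with hV
  have hV0 : 0 < V := ballVol_pos N R hR0
  have hsN : (0:ℝ) < Real.sqrt N := Real.sqrt_pos.2 (by exact_mod_cast hN)
  set t : ℝ := 2 * R / Real.sqrt N with htdef
  have ht : (0:ℝ) < t := by positivity
  set K : ℝ := ballVol N 1 / (8 * c') ^ N with hK
  -- the function
  set f : Euc N × ℝ → ℝ := fun cs =>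
    (countP' Λ x R (cube cs.1 cs.2) : ℝ) * V / cs.2 ^ N with hf
  haveI : (⊤ : Filter (Euc N)).NeBot := by rw [Filter.neBot_iff]; exact top_ne_bot
  haveI : (cubeFilter N).NeBot := Filter.prod_neBot.2 ⟨this, atTop_neBot⟩
  have hsnd : Tendsto Prod.snd (cubeFilter N) atTop := tendsto_snd
  -- lower bound eventually
  have hmain : ∀ (a : Euc N) (s : ℝ), 4 * D ≤ s → K ≤ f (a, s) := by
    intro a s hs
    have hs0 : (0:ℝ) < s := by nlinarith
    have hcount := countP'_lower hN Λ x R hR c' hc' hcover a s (by rw [← hD]; exact hs)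
    set m : ℕ := ⌊s / D⌋₊ - 1 with hm
    have hfl : 4 ≤ ⌊s / D⌋₊ := by
      have : (4:ℝ) ≤ s / D := (le_div_iff₀ hD0).2 (by linarith)
      exact_mod_cast Nat.le_floor (by exact_mod_cast this)
    have hmr : s / (2 * D) ≤ (m : ℝ) := by
      have h1 : ((m:ℝ)) = (⌊s / D⌋₊ : ℝ) - 1 := by
        rw [hm]; push_cast [Nat.cast_sub (by omega : 1 ≤ ⌊s / D⌋₊)]; ring
      have h2 : s / D - 1 < (⌊s / D⌋₊ : ℝ) := Nat.sub_one_lt_floor _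
      have h3 : (4:ℝ) ≤ s / D := (le_div_iff₀ hD0).2 (by linarith)
      have h4 : s / (2 * D) = s / D / 2 := by rw [div_div, mul_comm]
      rw [h1, h4]
      linarith
    have hsm : s ^ N ≤ (2 * D) ^ N * (m : ℝ) ^ N := by
      rw [← mul_pow]
      apply pow_le_pow_left₀ hs0.le
      calc s = (2 * D) * (s / (2 * D)) := by field_simp
        _ ≤ (2 * D) * (m : ℝ) := by
            apply mul_le_mul_of_nonneg_left hmr (by positivity)
    have hcount' : ((m:ℝ)) ^ N ≤ (countP' Λ x R (cube a s) : ℝ) := by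
      exact_mod_cast hcount
    have h2D : (2 * D) ^ N = (8 * c') ^ N * R ^ N := by
      rw [← mul_pow]; congr 1; rw [hD]; ring
    have hVscale : V = R ^ N * ballVol N 1 := ballVol_scale N R hR0.le
    rw [hf]
    simp only
    rw [hK, div_le_div_iff₀ (by positivity) (by positivity)]
    calc ballVol N 1 * s ^ N ≤ ballVol N 1 * ((2 * D) ^ N * (m:ℝ) ^ N) := by
          apply mul_le_mul_of_nonneg_left hsm (by
            have := ballVol_pos N 1 one_pos; linarith)
      _ = (m:ℝ) ^ N * V * (8 * c') ^ N := by rw [h2D, hVscale]; ring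
      _ ≤ (countP' Λ x R (cube a s) : ℝ) * V * (8 * c') ^ N := by
          apply mul_le_mul_of_nonneg_right (mul_le_mul_of_nonneg_right hcount' hV0.le)
            (by positivity)
  -- upper bound eventually
  have hupper : ∀ (a : Euc N) (s : ℝ), 1 ≤ s → f (a, s) ≤ (1 / t + 1) ^ N * V := by
    intro a s hs1
    have hs0 : (0:ℝ) < s := by linarith
    have h1 : (countP' Λ x R (cube a s) : ℝ) ≤ ((⌊s / t⌋₊ + 1 : ℕ) : ℝ) ^ N := by
      exact_mod_cast countP'_upper hN Λ x R hR0 a s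
    have h2 : ((⌊s / t⌋₊ + 1 : ℕ) : ℝ) ≤ s * (1 / t + 1) := by
      push_cast
      have h3 : (⌊s / t⌋₊ : ℝ) ≤ s / t := Nat.floor_le (by positivity)
      have : s / t = s * (1 / t) := by ring
      nlinarith
    have h4 : (countP' Λ x R (cube a s) : ℝ) ≤ s ^ N * (1 / t + 1) ^ N := by
      calc (countP' Λ x R (cube a s) : ℝ) ≤ ((⌊s / t⌋₊ + 1 : ℕ) : ℝ) ^ N := h1
        _ ≤ (s * (1 / t + 1)) ^ N := pow_le_pow_left₀ (by positivity) h2 N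
        _ = s ^ N * (1 / t + 1) ^ N := mul_pow _ _ _
    rw [hf]
    simp only
    rw [div_le_iff₀ (by positivity)]
    calc (countP' Λ x R (cube a s) : ℝ) * V ≤ s ^ N * (1 / t + 1) ^ N * V :=
          mul_le_mul_of_nonneg_right h4 hV0.le
      _ = (1 / t + 1) ^ N * V * s ^ N := by ring
  -- conclude
  have hev1 : ∀ᶠ cs : Euc N × ℝ in cubeFilter N, K ≤ f cs := by
    filter_upwards [hsnd.eventually_ge_atTop (4 * D)] with cs hcs
    exact hmain cs.1 cs.2 hcs
  have hbd : IsBoundedUnder (· ≤ ·) (cubeFilter N) f := by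
    apply Filter.isBoundedUnder_of_eventually_le (a := (1 / t + 1) ^ N * V)
    filter_upwards [hsnd.eventually_ge_atTop 1] with cs hcs
    exact hupper cs.1 cs.2 hcs
  exact le_liminf_of_le hbd.isCoboundedUnder_ge hev1

theorem lr_implies_pq {N : ℕ} (hN : 0 < N) (Λ : Set (Euc N))
    (hΛ : IsDelone Λ) (hLR : LR Λ) :
    PQ Λ := by
  classical
  set M : ℝ≥0∞ := ⨆ (x ∈ Λ) (R : ℝ) (_ : 1 ≤ R), rCov (locSet Λ x R) / ENNReal.ofReal R
    with hM
  have hMlt : M < ⊤ := hLR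
  set c : ℝ := M.toReal + 1 with hc
  have hc1 : 1 ≤ c := by
    have := ENNReal.toReal_nonneg (a := M); rw [hc]; linarith
  have hc0 : 0 < c := by linarith
  have hMc : M ≤ ENNReal.ofReal c := by
    calc M = ENNReal.ofReal M.toReal := (ENNReal.ofReal_toReal hMlt.ne).symm
      _ ≤ ENNReal.ofReal c := ENNReal.ofReal_le_ofReal (by rw [hc]; linarith)
  -- the covering property
  have hcov : ∀ x ∈ Λ, ∀ R : ℝ, 1 ≤ R → ∀ p : Euc N,
      ∃ y ∈ locSet Λ x R, dist p y < (2 * c) * R := by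
    intro x hx R hR p
    have hR0 : (0:ℝ) < R := by linarith
    have hsup : rCov (locSet Λ x R) / ENNReal.ofReal R ≤ M := by
      rw [hM]
      exact le_iSup₂_of_le x hx (le_iSup₂_of_le R hR le_rfl)
    have hRne : ENNReal.ofReal R ≠ 0 := by
      simp [ENNReal.ofReal_eq_zero]; linarith
    have hRnt : ENNReal.ofReal R ≠ ⊤ := ENNReal.ofReal_ne_top
    have hrc : rCov (locSet Λ x R) ≤ ENNReal.ofReal c * ENNReal.ofReal R := by
      have h2 := (ENNReal.div_le_iff hRne hRnt).1 hsup
      calc rCov (locSet Λ x R) ≤ M * ENNReal.ofReal R := h2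
        _ ≤ ENNReal.ofReal c * ENNReal.ofReal R :=
            mul_le_mul_left hMc _
    have hlt : EMetric.infEdist p (locSet Λ x R) < ENNReal.ofReal ((2 * c) * R) := by
      have h3 : EMetric.infEdist p (locSet Λ x R) ≤ rCov (locSet Λ x R) :=
        le_iSup (fun q => EMetric.infEdist q (locSet Λ x R)) p
      have h4 : ENNReal.ofReal c * ENNReal.ofReal R = ENNReal.ofReal (c * R) :=
        (ENNReal.ofReal_mul hc0.le).symm
      have h5 : ENNReal.ofReal (c * R) < ENNReal.ofReal ((2 * c) * R) := by
        rw [ENNReal.ofReal_lt_ofReal_iff (by nlinarith)]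
        nlinarith
      calc EMetric.infEdist p (locSet Λ x R) ≤ ENNReal.ofReal (c * R) := by
            rw [← h4]; exact le_trans h3 hrc
        _ < ENNReal.ofReal ((2 * c) * R) := h5
    obtain ⟨y, hy1, hy2⟩ := EMetric.infEdist_lt_iff.1 hlt
    exact ⟨y, hy1, edist_lt_ofReal.1 hy2⟩
  -- Λ is nonempty
  have hne : Λ.Nonempty := by
    by_contra h
    rw [Set.not_nonempty_iff_eq_empty] at h
    have : rCov Λ = ⊤ := by
      rw [rCov, h]
      simp [EMetric.infEdist, Metric.infEDist_empty]
    have h2 := hΛ.2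
    rw [RelativelyDense, this] at h2
    exact absurd h2 (lt_irrefl ⊤)
  obtain ⟨x₀, hx₀⟩ := hne
  set K : ℝ := ballVol N 1 / (8 * (2 * c)) ^ N with hK
  have hK0 : 0 < K := by
    rw [hK]
    apply div_pos (ballVol_pos N 1 one_pos)
    positivity
  have hSne : {v | ∃ x ∈ Λ, ∃ R : ℝ, 1 ≤ R ∧ v = nu' Λ x R}.Nonempty :=
    ⟨nu' Λ x₀ 1, x₀, hx₀, 1, le_rfl, rfl⟩
  have hlb : ∀ v ∈ {v | ∃ x ∈ Λ, ∃ R : ℝ, 1 ≤ R ∧ v = nu' Λ x R}, K ≤ v := by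
    rintro v ⟨x, hx, R, hR, rfl⟩
    exact nu'_lower hN Λ x R hR (2 * c) (by linarith) (hcov x hx R hR)
  have hfin : K ≤ wPQ Λ := le_csInf hSne hlb
  rw [PQ]
  linarith
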